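/- Let n, m, p, q ∈ ℕ and let F, f : ℝⁿ × ℝᵐ → ℝ, G : ℝⁿ × ℝᵐ → ℝ^q, g : ℝⁿ × ℝᵐ → ℝ^p be continuously differentiable. Assume: (i) f and each component gᵢ are convex as functions of the joint variable (x,y) (full convexity of the lower level); (ii) the optimal value function φ(x) := inf{ f(x,y) : y ∈ ℝᵐ, g(x,y) ≤ 0 } is finite on a neighborhood of x̄; (iii) (x̄,ȳ) is a local optimal solution of the problem min F(x,y) subject to G(x,y) ≤ 0, g(x,y) ≤ 0, f(x,y) ≤ φ(x); (iv) this problem is partially calm at (x̄,ȳ); (v) lower-level regularity holds at (x̄,ȳ): there is d ∈ ℝᵐ with ∇_y gᵢ(x̄,ȳ)ᵀd < 0 for every i with gᵢ(x̄,ȳ) = 0; (vi) upper-level regularity holds at (x̄,ȳ): there is d ∈ ℝⁿ⁺ᵐ with ∇G_j(x̄,ȳ)ᵀd < 0 for every j with G_j(x̄,ȳ) = 0 and ∇gᵢ(x̄,ȳ)ᵀd < 0 for every i with gᵢ(x̄,ȳ) = 0. Then there exist λ ≥ 0 and multipliers u, w ∈ ℝ^p, v ∈ ℝ^q such that: ∇ₓF(x̄,ȳ)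 + ∇ₓg(x̄,ȳ)ᵀ(u − λw) + ∇ₓG(x̄,ȳ)ᵀv = 0; ∇_yF(x̄,ȳ) + ∇_yg(x̄,ȳ)ᵀ(u − λw) + ∇_yG(x̄,ȳ)ᵀv = 0; ∇_yf(x̄,ȳ) + ∇_yg(x̄,ȳ)ᵀw = 0; u ≥ 0, g(x̄,ȳ) ≤ 0, uᵀg(x̄,ȳ) = 0; v ≥ 0, G(x̄,ȳ) ≤ 0, vᵀG(x̄,ȳ) = 0; w ≥ 0, wᵀg(x̄,ȳ) = 0. -/

import Mathlib

open Filter Topology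

/-- A finitely generated convex cone in a finite-dimensional space is closed. -/
lemma isClosed_finitely_generated_cone {E : Type*} [NormedAddCommGroup E] [NormedSpace ℝ E]
    [FiniteDimensional ℝ E] :
    ∀ (k : ℕ) (w : Fin k → E),
      IsClosed {x : E | ∃ μ : Fin k → ℝ, (∀ i, 0 ≤ μ i) ∧ x = ∑ i, μ i • w i} := by
  intro k
  induction k with
  | zero =>
    intro w
    have : {x : E | ∃ μ : Fin 0 → ℝ, (∀ i, 0 ≤ μ i) ∧ x = ∑ i, μ i • w i} = {0} := by
      ext x
      simp [Finset.univ_eq_empty]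
    rw [this]; exact isClosed_singleton
  | succ k ih =>
    intro w
    by_cases hLI : LinearIndependent ℝ w
    · -- image of closed orthant under a closed embedding
      set L : (Fin (k+1) → ℝ) →ₗ[ℝ] E :=
        { toFun := fun μ => ∑ i, μ i • w i
          map_add' := by intro a b; simp [add_smul, Finset.sum_add_distrib]
          map_smul' := by intro c a; simp [smul_smul, Finset.smul_sum] } with hL
      have hinj : LinearMap.ker L = ⊥ := by
        rw [LinearMap.ker_eq_bot']
        intro μ hμ
        have := Fintype.linearIndependent_iff.1 hLI μ hμ
        funext i; exact this i
      have hce := LinearMap.isClosedEmbedding_of_injective (𝕜 := ℝ) hinj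
      have : {x : E | ∃ μ : Fin (k+1) → ℝ, (∀ i, 0 ≤ μ i) ∧ x = ∑ i, μ i • w i}
          = L '' {μ | ∀ i, 0 ≤ μ i} := by
        ext x
        constructor
        · rintro ⟨μ, hμ, rfl⟩; exact ⟨μ, hμ, rfl⟩
        · rintro ⟨μ, hμ, rfl⟩; exact ⟨μ, hμ, rfl⟩
      rw [this]
      refine hce.isClosedMap _ ?_
      have : {μ : Fin (k+1) → ℝ | ∀ i, 0 ≤ μ i} = Set.pi Set.univ fun _ => Set.Ici 0 := by
        ext; simp [Set.mem_pi, Pi.le_def]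
      rw [this]
      exact isClosed_set_pi fun i _ => isClosed_Ici
    · -- get a nontrivial relation with a positive coefficient
      obtain ⟨gg, hgg0, i₀, hgi₀⟩ := Fintype.not_linearIndependent_iff.1 hLI
      have hrel : ∃ c : Fin (k+1) → ℝ, (∑ i, c i • w i = 0) ∧ ∃ i, 0 < c i := by
        rcases lt_trichotomy (gg i₀) 0 with h | h | h
        · exact ⟨-gg, by simp [neg_smul, hgg0], i₀, by simpa using h⟩
        · exact absurd h hgi₀
        · exact ⟨gg, hgg0, i₀, h⟩
      obtain ⟨c, hc0, hcpos⟩ := hrel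
      have key : {x : E | ∃ μ : Fin (k+1) → ℝ, (∀ i, 0 ≤ μ i) ∧ x = ∑ i, μ i • w i}
          = ⋃ i₀ : Fin (k+1),
            {x : E | ∃ ν : Fin k → ℝ, (∀ j, 0 ≤ ν j) ∧ x = ∑ j, ν j • w (i₀.succAbove j)} := by
        ext x
        constructor
        · rintro ⟨μ, hμ, rfl⟩
          set S : Finset (Fin (k+1)) := Finset.univ.filter fun i => 0 < c i with hS
          have hSne : S.Nonempty := by
            obtain ⟨i, hi⟩ := hcpos
            exact ⟨i, by simp [hS, hi]⟩
          obtain ⟨j₀, hj₀S, hj₀min⟩ := S.exists_min_image (fun i => μ i / c i) hSne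
          have hcj₀ : 0 < c j₀ := by simpa [hS] using hj₀S
          set t : ℝ := μ j₀ / c j₀ with ht
          have ht0 : 0 ≤ t := div_nonneg (hμ j₀) hcj₀.le
          set μ' : Fin (k+1) → ℝ := fun i => μ i - t * c i with hμ'
          have hμ'0 : ∀ i, 0 ≤ μ' i := by
            intro i
            rcases le_or_gt (c i) 0 with h | h
            · have : t * c i ≤ 0 := mul_nonpos_of_nonneg_of_nonpos ht0 h
              simp only [hμ']; linarith [hμ i]
            · have hiS : i ∈ S := by simp [hS, h]
              have := hj₀min i hiS
              have : t ≤ μ i / c i := this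
              have : t * c i ≤ μ i := by
                rw [div_le_div_iff₀ hcj₀ h] at *
                calc t * c i = (μ j₀ / c j₀) * c i := by rw [ht]
                _ ≤ (μ i / c i) * c i := by
                    apply mul_le_mul_of_nonneg_right (hj₀min i hiS) h.le
                _ = μ i := by field_simp
              simp only [hμ']; linarith
          have hμ'j₀ : μ' j₀ = 0 := by
            simp only [hμ', ht]; field_simp; ring
          have hsum : ∑ i, μ' i • w i = ∑ i, μ i • w i := by
            simp only [hμ', sub_smul, smul_smul, Finset.sum_sub_distrib]
            rw [show ∑ i, (t * c i) • w i = t • ∑ i, c i • w i by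
              rw [Finset.smul_sum]; congr 1; ext i; rw [smul_smul]]
            rw [hc0, smul_zero, sub_zero]
          refine Set.mem_iUnion.2 ⟨j₀, ⟨fun j => μ' (j₀.succAbove j), fun j => hμ'0 _, ?_⟩⟩
          rw [← hsum, Fin.sum_univ_succAbove (fun i => μ' i • w i) j₀, hμ'j₀, zero_smul, zero_add]
        · intro hx
          obtain ⟨i₀, ν, hν, rfl⟩ := Set.mem_iUnion.1 hx
          refine ⟨Fin.insertNth i₀ 0 ν, ?_, ?_⟩
          · intro i
            rcases eq_or_ne i i₀ with rfl | h
            · simp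
            · obtain ⟨j, hj⟩ := Fin.exists_succAbove_eq h
              rw [← hj]
              rw [Fin.insertNth_apply_succAbove]; exact hν j
          · have := Fin.sum_univ_succAbove
              (fun i => (Fin.insertNth i₀ (0:ℝ) ν : Fin (k+1) → ℝ) i • w i) i₀
            rw [this]
            simp [Fin.insertNth_apply_same, Fin.insertNth_apply_succAbove]
      rw [key]
      exact isClosed_iUnion_of_finite fun i₀ => ih _

/-- Farkas-type lemma in an inner product space. -/
lemma farkas_inner {E : Type*} [NormedAddCommGroup E] [InnerProductSpace ℝ E]
    [FiniteDimensional ℝ E] {ι : Type*} [Fintype ι]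
    (l : ι → E →L[ℝ] ℝ) (c : E →L[ℝ] ℝ)
    (h : ∀ d, (∀ k, l k d ≤ 0) → 0 ≤ c d) :
    ∃ μ : ι → ℝ, (∀ k, 0 ≤ μ k) ∧ ∀ d, c d + ∑ k, μ k * l k d = 0 := by
  classical
  set a : ι → E := fun k => (InnerProductSpace.toDual ℝ E).symm (l k) with ha
  set b : E := (InnerProductSpace.toDual ℝ E).symm c with hb
  have hak : ∀ k d, inner ℝ (a k) d = l k d := fun k d => InnerProductSpace.toDual_symm_apply
  have hbd : ∀ d, inner ℝ b d = c d := fun d => InnerProductSpace.toDual_symm_apply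
  -- the cone generated by the -a k, as a set indexed by Fin (card ι)
  let e := (Fintype.equivFin ι).symm
  set K : ConvexCone ℝ E :=
    { carrier := {x : E | ∃ μ : Fin (Fintype.card ι) → ℝ, (∀ i, 0 ≤ μ i) ∧
        x = ∑ i, μ i • (-(a (e i)))}
      smul_mem' := by
        rintro r hr x ⟨μ, hμ, rfl⟩
        exact ⟨fun i => r * μ i, fun i => mul_nonneg hr.le (hμ i), by
          rw [Finset.smul_sum]; congr 1; ext i; rw [smul_smul]⟩
      add_mem' := by
        rintro x ⟨μ, hμ, rfl⟩ y ⟨ν, hν, rfl⟩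
        exact ⟨fun i => μ i + ν i, fun i => add_nonneg (hμ i) (hν i), by
          rw [← Finset.sum_add_distrib]; congr 1; ext i; rw [add_smul]⟩ } with hK
  have hKclosed : IsClosed (K : Set E) :=
    isClosed_finitely_generated_cone (Fintype.card ι) fun i => -(a (e i))
  have hKne : ((K : Set E)).Nonempty := ⟨0, ⟨fun _ => 0, fun _ => le_rfl, by simp⟩⟩
  have hbK : b ∈ K := by
    by_contra hbK
    obtain ⟨y, hy1, hy2⟩ : ∃ y, (∀ x ∈ K, 0 ≤ inner ℝ x y) ∧ inner ℝ y b < 0 := by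
      let C : ProperCone ℝ E :=
        { carrier := (K : Set E)
          add_mem' := fun hx hy => K.add_mem hx hy
          zero_mem' := ⟨fun _ => 0, fun _ => le_rfl, by simp⟩
          smul_mem' := by
            rintro c x ⟨μ, hμ, rfl⟩
            exact ⟨fun i => c * μ i, fun i => mul_nonneg c.2 (hμ i), by
              change (c : ℝ) • (∑ i, μ i • (-(a (e i))) : E) = _; rw [Finset.smul_sum]; congr 1; ext i; rw [smul_smul]⟩
          isClosed' := hKclosed }
      obtain ⟨y, hy1, hy2⟩ := ProperCone.hyperplane_separation' C (x₀ := b) hbK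
      exact ⟨y, fun x hx => hy1 x hx, by rw [real_inner_comm]; exact hy2⟩
    have hy3 : ∀ k, l k y ≤ 0 := by
      intro k
      have hmem : -(a k) ∈ K := by
        refine ⟨fun i => if e i = k then 1 else 0, fun i => by positivity, ?_⟩
        rw [Finset.sum_eq_single ((Fintype.equivFin ι) k)]
        · simp [e]
        · intro i _ hi
          have : e i ≠ k := by
            simp only [e]
            intro hcontra
            exact hi (by rw [← hcontra]; simp)
          simp [this]
        · simp
      have := hy1 _ hmem
      rw [inner_neg_left, hak] at this
      linarith
    have := h y hy3
    rw [← hbd] at this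
    rw [real_inner_comm] at hy2
    linarith
  obtain ⟨μ, hμ, hbeq⟩ := hbK
  refine ⟨fun k => μ ((Fintype.equivFin ι) k), fun k => hμ _, fun d => ?_⟩
  have : c d = inner ℝ b d := (hbd d).symm
  rw [this, hbeq, sum_inner]
  have hterm : ∀ i, inner ℝ (μ i • (-(a (e i)))) d = -(μ i * l (e i) d) := by
    intro i
    rw [real_inner_smul_left, inner_neg_left, hak]; ring
  rw [Finset.sum_congr rfl fun i _ => hterm i,
    ← Equiv.sum_comp e (fun k => μ ((Fintype.equivFin ι) k) * (l k) d)]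
  simp only [e, Equiv.apply_symm_apply]
  rw [← Finset.sum_add_distrib]
  simp

/-- Farkas-type lemma in a finite-dimensional normed space. -/
lemma farkas {E : Type*} [NormedAddCommGroup E] [NormedSpace ℝ E]
    [FiniteDimensional ℝ E] {ι : Type*} [Fintype ι]
    (l : ι → E →L[ℝ] ℝ) (c : E →L[ℝ] ℝ)
    (h : ∀ d, (∀ k, l k d ≤ 0) → 0 ≤ c d) :
    ∃ μ : ι → ℝ, (∀ k, 0 ≤ μ k) ∧ ∀ d, c d + ∑ k, μ k * l k d = 0 := by
  set eE := toEuclidean (E := E)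
  obtain ⟨μ, hμ, heq⟩ := farkas_inner
    (fun k => (l k).comp (eE.symm : EuclideanSpace ℝ (Fin (Module.finrank ℝ E)) →L[ℝ] E))
    (c.comp (eE.symm : EuclideanSpace ℝ (Fin (Module.finrank ℝ E)) →L[ℝ] E))
    (fun d hd => h (eE.symm d) hd)
  refine ⟨μ, hμ, fun d => ?_⟩
  have := heq (eE d)
  simpa using this

lemma eventually_lt_nhdsGT_of_deriv_neg {ψ : ℝ → ℝ} {a : ℝ}
    (hψ : HasDerivAt ψ a 0) (ha : a < 0) :
    ∀ᶠ t in 𝓝[>] (0:ℝ), ψ t < ψ 0 := by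
  have h1 : Tendsto (slope ψ 0) (𝓝[≠] 0) (𝓝 a) := hasDerivAt_iff_tendsto_slope.1 hψ
  have h2 : ∀ᶠ t in 𝓝[≠] (0:ℝ), slope ψ 0 t < 0 := h1.eventually_lt_const ha
  have h3 : ∀ᶠ t in 𝓝[>] (0:ℝ), slope ψ 0 t < 0 :=
    h2.filter_mono (nhdsWithin_mono 0 fun t ht => ne_of_gt ht)
  filter_upwards [h3, self_mem_nhdsWithin] with t ht ht0
  have ht0' : (0:ℝ) < t := ht0
  rw [slope_def_field] at ht
  have := (div_lt_iff₀ (by simpa using ht0')).1 (by simpa using ht)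
  linarith

/-- KKT conditions for a smooth inequality-constrained local minimum under MFCQ. -/
lemma kkt_smooth {E : Type*} [NormedAddCommGroup E] [NormedSpace ℝ E] [FiniteDimensional ℝ E]
    {ι : Type*} [Fintype ι]
    {h : E → ℝ} {c : ι → E → ℝ} {zb : E}
    {Dh : E →L[ℝ] ℝ} {Dc : ι → E →L[ℝ] ℝ}
    (hh : HasFDerivAt h Dh zb) (hc : ∀ k, HasFDerivAt (c k) (Dc k) zb)
    (hfeas : ∀ k, c k zb ≤ 0)
    (hmin : ∀ᶠ z in 𝓝 zb, (∀ k, c k z ≤ 0) → h zb ≤ h z)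
    (hmfcq : ∃ d, ∀ k, c k zb = 0 → Dc k d < 0) :
    ∃ μ : ι → ℝ, (∀ k, 0 ≤ μ k) ∧ (∀ k, μ k * c k zb = 0) ∧
      ∀ d, Dh d + ∑ k, μ k * Dc k d = 0 := by
  classical
  -- Step 1: no strict feasible descent direction
  have key : ∀ d : E, Dh d < 0 → (∀ k, c k zb = 0 → Dc k d < 0) → False := by
    intro d hd hdk
    set γ : ℝ → E := fun t => zb + t • d with hγ
    have hγ0 : γ 0 = zb := by simp [hγ]
    have hγd : HasDerivAt γ d 0 := by
      have h1 : HasDerivAt (fun t : ℝ => t • d) ((1:ℝ) • d) 0 :=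
        (hasDerivAt_id (0:ℝ)).smul_const d
      rw [one_smul] at h1
      exact h1.const_add zb
    have hcomp : ∀ (φ : E → ℝ) (Dφ : E →L[ℝ] ℝ), HasFDerivAt φ Dφ zb →
        HasDerivAt (fun t => φ (γ t)) (Dφ d) 0 := by
      intro φ Dφ hφ
      have hφ' : HasFDerivAt φ Dφ (γ 0) := by rw [hγ0]; exact hφ
      exact hφ'.comp_hasDerivAt 0 hγd
    have Ev1 : ∀ᶠ t in 𝓝[>] (0:ℝ), h (γ t) < h zb := by
      have := eventually_lt_nhdsGT_of_deriv_neg (hcomp h Dh hh) hd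
      simpa [hγ0] using this
    have hγcont : Tendsto γ (𝓝[>] (0:ℝ)) (𝓝 zb) := by
      have : Continuous γ := by continuity
      have := this.tendsto 0
      rw [hγ0] at this
      exact this.mono_left nhdsWithin_le_nhds
    have Ev2 : ∀ᶠ t in 𝓝[>] (0:ℝ), ∀ k, c k (γ t) ≤ 0 := by
      rw [eventually_all]
      intro k
      rcases eq_or_lt_of_le (hfeas k) with hk | hk
      · have := eventually_lt_nhdsGT_of_deriv_neg (hcomp (c k) (Dc k) (hc k)) (hdk k hk)
        filter_upwards [this] with t ht
        rw [hγ0, hk] at ht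
        exact ht.le
      · have : Tendsto (fun t => c k (γ t)) (𝓝[>] (0:ℝ)) (𝓝 (c k zb)) := by
          have := ((hc k).continuousAt.tendsto).comp hγcont
          exact this
        filter_upwards [this.eventually_lt_const hk] with t ht using ht.le
    have Ev3 : ∀ᶠ t in 𝓝[>] (0:ℝ), (∀ k, c k (γ t) ≤ 0) → h zb ≤ h (γ t) :=
      hγcont.eventually hmin
    obtain ⟨t, h1, h2, h3⟩ := (Ev1.and (Ev2.and Ev3)).exists
    exact absurd (h3 h2) (by linarith)
  -- Step 2: Dh is nonnegative on the linearization cone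
  obtain ⟨d₀, hd₀⟩ := hmfcq
  have claim2 : ∀ d : E, (∀ k, c k zb = 0 → Dc k d ≤ 0) → 0 ≤ Dh d := by
    intro d hd
    have step : ∀ ε : ℝ, 0 < ε → 0 ≤ Dh d + ε * Dh d₀ := by
      intro ε hε
      by_contra hneg
      push_neg at hneg
      refine key (d + ε • d₀) ?_ ?_
      · rw [map_add, map_smul, smul_eq_mul]; exact hneg
      · intro k hk
        rw [map_add, map_smul, smul_eq_mul]
        have h1 := hd k hk
        have h2 := hd₀ k hk
        nlinarith
    by_contra h'
    push_neg at h'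
    rcases le_or_gt (Dh d₀) 0 with h0 | h0
    · have := step 1 one_pos; linarith
    · have hε : 0 < -Dh d / (2 * Dh d₀) := div_pos (by linarith) (by linarith)
      have := step _ hε
      rw [div_mul_eq_mul_div] at this
      have heq : -Dh d * Dh d₀ / (2 * Dh d₀) = -Dh d / 2 := by
        field_simp
      rw [heq] at this
      linarith
  -- Step 3: Farkas on the active constraints
  obtain ⟨μ', hμ'0, hμ'⟩ := farkas (ι := {k : ι // c k zb = 0})
    (fun k => Dc k.1) Dh (fun d hd => claim2 d fun k hk => hd ⟨k, hk⟩)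
  set μ : ι → ℝ := fun k => if hk : c k zb = 0 then μ' ⟨k, hk⟩ else 0 with hμdef
  refine ⟨μ, ?_, ?_, ?_⟩
  · intro k; by_cases hk : c k zb = 0 <;> simp [hμdef, hk, hμ'0]
  · intro k; by_cases hk : c k zb = 0 <;> simp [hμdef, hk]
  · intro d
    have hsum : ∑ k : ι, μ k * Dc k d = ∑ k : {k : ι // c k zb = 0}, μ' k * Dc k.1 d := by
      have h1 : ∑ k ∈ Finset.univ.filter (fun k => c k zb = 0), μ k * Dc k d
          = ∑ k : ι, μ k * Dc k d :=
        Finset.sum_filter_of_ne (by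
          intro k _ hne
          by_contra hk
          exact hne (by simp [hμdef, hk]))
      have h2 : ∑ k ∈ Finset.univ.filter (fun k => c k zb = 0), μ k * Dc k d
          = ∑ k : {k : ι // c k zb = 0}, μ k.1 * Dc k.1 d :=
        Finset.sum_subtype _ (by simp) (fun k => μ k * Dc k d)
      rw [← h1, h2]
      refine Finset.sum_congr rfl fun k _ => ?_
      simp [hμdef, k.2]
    rw [hsum]
    exact hμ' d

/-- A convex differentiable function lies above its tangent plane. -/
lemma convexOn_ge_tangent {E : Type*} [NormedAddCommGroup E] [NormedSpace ℝ E]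
    {L : E → ℝ} {D : E →L[ℝ] ℝ} {zb z : E}
    (hconv : ConvexOn ℝ Set.univ L) (hD : HasFDerivAt L D zb) :
    L zb + D (z - zb) ≤ L z := by
  set ψ : ℝ → ℝ := fun t => L (zb + t • (z - zb)) with hψ
  have hψ0 : ψ 0 = L zb := by simp [hψ]
  have hψ1 : ψ 1 = L z := by simp [hψ]
  have hder : HasDerivAt ψ (D (z - zb)) 0 := by
    have h1 : HasDerivAt (fun t : ℝ => zb + t • (z - zb)) (z - zb) 0 := by
      have := (hasDerivAt_id (0:ℝ)).smul_const (z - zb)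
      rw [one_smul] at this
      exact this.const_add zb
    have hD' : HasFDerivAt L D (zb + (0:ℝ) • (z - zb)) := by simpa using hD
    exact hD'.comp_hasDerivAt 0 h1
  have hslope : ∀ t : ℝ, 0 < t → t ≤ 1 → slope ψ 0 t ≤ ψ 1 - ψ 0 := by
    intro t ht0 ht1
    have hcvx := hconv.2 (Set.mem_univ zb) (Set.mem_univ z)
      (show (0:ℝ) ≤ 1 - t by linarith) ht0.le (show (1 - t) + t = 1 by ring)
    have harg : (1 - t) • zb + t • z = zb + t • (z - zb) := by
      rw [smul_sub, sub_smul, one_smul]; abel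
    rw [harg] at hcvx
    rw [slope_def_field]
    rw [div_le_iff₀ (by simpa using ht0)]
    have : ψ t ≤ (1 - t) * L zb + t * L z := by simpa [hψ, smul_eq_mul] using hcvx
    rw [hψ0, hψ1]
    simp only [sub_zero]
    nlinarith
  have htend : Tendsto (slope ψ 0) (𝓝[>] (0:ℝ)) (𝓝 (D (z - zb))) :=
    (hasDerivAt_iff_tendsto_slope.1 hder).mono_left
      (nhdsWithin_mono 0 fun t ht => ne_of_gt ht)
  have hev : ∀ᶠ t in 𝓝[>] (0:ℝ), slope ψ 0 t ≤ ψ 1 - ψ 0 := by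
    have hmem : Set.Ioo (0:ℝ) 1 ∈ 𝓝[>] (0:ℝ) := Ioo_mem_nhdsGT (by norm_num)
    filter_upwards [hmem] with t ht
    exact hslope t ht.1 ht.2.le
  have := le_of_tendsto htend hev
  rw [hψ0, hψ1] at this
  linarith

/-- KKT-type necessary optimality conditions for the lower-level value function
reformulation of the bilevel program, under full convexity of the lower level,
finiteness of the value function near `x̄`, partial calmness, and lower- and
upper-level regularity (MFCQ). -/
theorem bilevel_LLVF_necessary_optimality_conditions
    (n m p q : ℕ)
    (F f : (Fin n → ℝ) × (Fin m → ℝ) → ℝ)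
    (G : (Fin n → ℝ) × (Fin m → ℝ) → Fin q → ℝ)
    (g : (Fin n → ℝ) × (Fin m → ℝ) → Fin p → ℝ)
    (hF : ContDiff ℝ 1 F) (hf : ContDiff ℝ 1 f)
    (hG : ∀ j, ContDiff ℝ 1 fun z => G z j)
    (hg : ∀ i, ContDiff ℝ 1 fun z => g z i)
    -- (i) full convexity of the lower-level problem
    (hconvf : ConvexOn ℝ Set.univ f)
    (hconvg : ∀ i, ConvexOn ℝ Set.univ fun z => g z i)
    -- the optimal value function φ
    (φ : (Fin n → ℝ) → ℝ)
    (hφ : ∀ x, φ x = sInf {r | ∃ y : Fin m → ℝ, (∀ i, g (x, y) i ≤ 0) ∧ f (x, y) = r})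
    (xbar : Fin n → ℝ) (ybar : Fin m → ℝ)
    -- (ii) φ is finite on a neighborhood of x̄
    (hfinite : ∀ᶠ x in 𝓝 xbar,
      {r | ∃ y : Fin m → ℝ, (∀ i, g (x, y) i ≤ 0) ∧ f (x, y) = r}.Nonempty ∧
      BddBelow {r | ∃ y : Fin m → ℝ, (∀ i, g (x, y) i ≤ 0) ∧ f (x, y) = r})
    -- (iii) (x̄,ȳ) is a local optimal solution of the LLVF reformulation
    (hfeas : (∀ j, G (xbar, ybar) j ≤ 0) ∧ (∀ i, g (xbar, ybar) i ≤ 0) ∧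
      f (xbar, ybar) ≤ φ xbar)
    (hlocal : ∀ᶠ z in 𝓝 (xbar, ybar),
      ((∀ j, G z j ≤ 0) ∧ (∀ i, g z i ≤ 0) ∧ f z ≤ φ z.1) → F (xbar, ybar) ≤ F z)
    -- (iv) partial calmness at (x̄,ȳ)
    (hcalm : ∃ lam > (0 : ℝ), ∀ᶠ zt in 𝓝 (((xbar, ybar), (0 : ℝ))),
      ((∀ j, G zt.1 j ≤ 0) ∧ (∀ i, g zt.1 i ≤ 0) ∧ f zt.1 - φ zt.1.1 - zt.2 = 0) →
        0 ≤ F zt.1 - F (xbar, ybar) + lam * |zt.2|)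
    -- (v) lower-level regularity at (x̄,ȳ)
    (hLLreg : ∃ d : Fin m → ℝ, ∀ i, g (xbar, ybar) i = 0 →
      fderiv ℝ (fun z => g z i) (xbar, ybar) (0, d) < 0)
    -- (vi) upper-level regularity at (x̄,ȳ)
    (hULreg : ∃ d : (Fin n → ℝ) × (Fin m → ℝ),
      (∀ j, G (xbar, ybar) j = 0 → fderiv ℝ (fun z => G z j) (xbar, ybar) d < 0) ∧
      (∀ i, g (xbar, ybar) i = 0 → fderiv ℝ (fun z => g z i) (xbar, ybar) d < 0)) :
    ∃ (lam : ℝ) (u w : Fin p → ℝ) (v : Fin q → ℝ), 0 ≤ lam ∧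
      (∀ dx : Fin n → ℝ,
        fderiv ℝ F (xbar, ybar) (dx, 0)
          + ∑ i, (u i - lam * w i) * fderiv ℝ (fun z => g z i) (xbar, ybar) (dx, 0)
          + ∑ j, v j * fderiv ℝ (fun z => G z j) (xbar, ybar) (dx, 0) = 0) ∧
      (∀ dy : Fin m → ℝ,
        fderiv ℝ F (xbar, ybar) (0, dy)
          + ∑ i, (u i - lam * w i) * fderiv ℝ (fun z => g z i) (xbar, ybar) (0, dy)
          + ∑ j, v j * fderiv ℝ (fun z => G z j) (xbar, ybar) (0, dy) = 0) ∧
      (∀ dy : Fin m → ℝ,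
        fderiv ℝ f (xbar, ybar) (0, dy)
          + ∑ i, w i * fderiv ℝ (fun z => g z i) (xbar, ybar) (0, dy) = 0) ∧
      (∀ i, 0 ≤ u i) ∧ (∀ i, g (xbar, ybar) i ≤ 0) ∧
      (∑ i, u i * g (xbar, ybar) i = 0) ∧
      (∀ j, 0 ≤ v j) ∧ (∀ j, G (xbar, ybar) j ≤ 0) ∧
      (∑ j, v j * G (xbar, ybar) j = 0) ∧
      (∀ i, 0 ≤ w i) ∧ (∑ i, w i * g (xbar, ybar) i = 0) := by
  classical
  set zb : (Fin n → ℝ) × (Fin m → ℝ) := (xbar, ybar) with hzb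
  set DF : (Fin n → ℝ) × (Fin m → ℝ) →L[ℝ] ℝ := fderiv ℝ F zb with hDFdef
  set Df : (Fin n → ℝ) × (Fin m → ℝ) →L[ℝ] ℝ := fderiv ℝ f zb with hDfdef
  set Dg : Fin p → ((Fin n → ℝ) × (Fin m → ℝ) →L[ℝ] ℝ) :=
    fun i => fderiv ℝ (fun z => g z i) zb with hDgdef
  set DG : Fin q → ((Fin n → ℝ) × (Fin m → ℝ) →L[ℝ] ℝ) :=
    fun j => fderiv ℝ (fun z => G z j) zb with hDGdef
  have hDF : HasFDerivAt F DF zb := ((hF.differentiable one_ne_zero) zb).hasFDerivAt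
  have hDf : HasFDerivAt f Df zb := ((hf.differentiable one_ne_zero) zb).hasFDerivAt
  have hDg : ∀ i, HasFDerivAt (fun z => g z i) (Dg i) zb :=
    fun i => (((hg i).differentiable one_ne_zero) zb).hasFDerivAt
  have hDG : ∀ j, HasFDerivAt (fun z => G z j) (DG j) zb :=
    fun j => (((hG j).differentiable one_ne_zero) zb).hasFDerivAt
  -- the value function data at xbar
  have hfin0 := hfinite.self_of_nhds
  -- ybar is a global minimizer of the lower-level problem at xbar
  have hgmin : ∀ y : Fin m → ℝ, (∀ i, g (xbar, y) i ≤ 0) → f zb ≤ f (xbar, y) := by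
    intro y hy
    refine le_trans hfeas.2.2 ?_
    rw [hφ xbar]
    exact csInf_le hfin0.2 ⟨y, hy, rfl⟩
  -- Step A: lower-level KKT multiplier w
  set inr : (Fin m → ℝ) →L[ℝ] (Fin n → ℝ) × (Fin m → ℝ) :=
    ContinuousLinearMap.inr ℝ (Fin n → ℝ) (Fin m → ℝ) with hinr
  have hmk : HasFDerivAt (fun y : Fin m → ℝ => ((xbar, y) : (Fin n → ℝ) × (Fin m → ℝ)))
      inr ybar := hasFDerivAt_prodMk_right xbar ybar
  have hlowf : HasFDerivAt (fun y => f (xbar, y)) (Df.comp inr) ybar :=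
    hDf.comp ybar hmk
  have hlowg : ∀ i, HasFDerivAt (fun y => g (xbar, y) i) ((Dg i).comp inr) ybar :=
    fun i => (hDg i).comp ybar hmk
  obtain ⟨w, hw0, hwc, hwstat⟩ := kkt_smooth (c := fun i (y : Fin m → ℝ) => g (xbar, y) i)
    hlowf hlowg (fun i => hfeas.2.1 i)
    (Filter.Eventually.of_forall fun y hy => hgmin y hy)
    (by
      obtain ⟨d, hd⟩ := hLLreg
      exact ⟨d, fun i hi => by simpa [hinr] using hd i hi⟩)
  have hwstat' : ∀ dy : Fin m → ℝ, Df (0, dy) + ∑ i, w i * Dg i (0, dy) = 0 := by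
    intro dy
    have := hwstat dy
    simpa [hinr] using this
  -- Step B: an affine minorant of φ via the lower-level Lagrangian
  set DL : (Fin n → ℝ) × (Fin m → ℝ) →L[ℝ] ℝ := Df + ∑ i, w i • Dg i with hDLdef
  have hLder : HasFDerivAt (fun z => f z + ∑ i, w i * g z i) DL zb := by
    exact hDf.add (HasFDerivAt.fun_sum fun i _ => (hDg i).const_mul (w i))
  have hLconv : ConvexOn ℝ Set.univ (fun z => f z + ∑ i, w i * g z i) := by
    refine hconvf.add ?_
    have : ∀ s : Finset (Fin p), ConvexOn ℝ Set.univ (fun z => ∑ i ∈ s, w i * g z i) := by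
      intro s
      induction s using Finset.induction with
      | empty => simpa using convexOn_const (0:ℝ) convex_univ
      | @insert a s ha ih =>
        have h1 : ConvexOn ℝ Set.univ (fun z => w a * g z a) := by
          have := (hconvg a).smul (hw0 a)
          simpa [smul_eq_mul] using this
        have := h1.add ih
        rw [show (fun z => ∑ i ∈ insert a s, w i * g z i)
            = (fun z => w a * g z a) + fun z => ∑ i ∈ s, w i * g z i from
          funext fun z => by simp [Finset.sum_insert ha]]
        exact this
    exact this Finset.univ
  have hLzb : ∑ i, w i * g zb i = 0 := Finset.sum_eq_zero fun i _ => hwc i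
  have hDL0 : ∀ dy : Fin m → ℝ, DL ((0 : Fin n → ℝ), dy) = 0 := by
    intro dy
    have : DL ((0 : Fin n → ℝ), dy) = Df (0, dy) + ∑ i, w i * Dg i (0, dy) := by
      simp [hDLdef, ContinuousLinearMap.sum_apply, smul_eq_mul]
    rw [this, hwstat' dy]
  have htan : ∀ z : (Fin n → ℝ) × (Fin m → ℝ),
      (f zb + ∑ i, w i * g zb i) + DL (z - zb) ≤ f z + ∑ i, w i * g z i :=
    fun z => convexOn_ge_tangent hLconv hLder
  have hlb : ∀ x y, (∀ i, g (x, y) i ≤ 0) → f zb + DL (x - xbar, 0) ≤ f (x, y) := by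
    intro x y hy
    have h1 := htan (x, y)
    rw [hLzb, add_zero] at h1
    have h2 : ∑ i, w i * g (x, y) i ≤ 0 :=
      Finset.sum_nonpos fun i _ => mul_nonpos_of_nonneg_of_nonpos (hw0 i) (hy i)
    have h3 : ((x, y) - zb : (Fin n → ℝ) × (Fin m → ℝ)) = (x - xbar, y - ybar) := by
      simp [hzb, Prod.ext_iff]
    rw [h3] at h1
    have h4 : ((x - xbar, y - ybar) : (Fin n → ℝ) × (Fin m → ℝ))
        = (x - xbar, 0) + (0, y - ybar) := by simp [Prod.ext_iff]
    rw [h4, map_add, hDL0] at h1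
    linarith
  have hphi_lb : ∀ x : Fin n → ℝ,
      {r | ∃ y : Fin m → ℝ, (∀ i, g (x, y) i ≤ 0) ∧ f (x, y) = r}.Nonempty →
      f zb + DL (x - xbar, 0) ≤ φ x := by
    intro x hne
    rw [hφ x]
    refine le_csInf hne ?_
    rintro r ⟨y, hy, rfl⟩
    exact hlb x y hy
  -- Step C: exact penalization
  obtain ⟨lam, hlam, hcalm'⟩ := hcalm
  set B : (Fin n → ℝ) × (Fin m → ℝ) →L[ℝ] ℝ :=
    DL.comp ((ContinuousLinearMap.inl ℝ (Fin n → ℝ) (Fin m → ℝ)).comp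
      (ContinuousLinearMap.fst ℝ (Fin n → ℝ) (Fin m → ℝ))) with hBdef
  have hB : ∀ z : (Fin n → ℝ) × (Fin m → ℝ), B z = DL (z.1, 0) := fun z => rfl
  have hmemprod := hcalm'
  rw [nhds_prod_eq] at hmemprod
  obtain ⟨U, hU, V, hV, hUV⟩ := Filter.mem_prod_iff.1 hmemprod
  obtain ⟨δ, hδ, hball⟩ := Metric.mem_nhds_iff.1 hV
  have e1 : ∀ᶠ z : (Fin n → ℝ) × (Fin m → ℝ) in 𝓝 zb, z ∈ U := hU
  have e2 : ∀ᶠ z : (Fin n → ℝ) × (Fin m → ℝ) in 𝓝 zb,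
      f z - f zb - (B z - B zb) < δ := by
    have ht : Filter.Tendsto (fun z => f z - f zb - (B z - B zb)) (𝓝 zb) (𝓝 0) := by
      have h1' : Filter.Tendsto (fun z => f z - f zb) (𝓝 zb) (𝓝 (f zb - f zb)) :=
        (hf.continuous.tendsto zb).sub tendsto_const_nhds
      have h2' : Filter.Tendsto (fun z => B z - B zb) (𝓝 zb) (𝓝 (B zb - B zb)) :=
        (B.continuous.tendsto zb).sub tendsto_const_nhds
      have := h1'.sub h2'
      simpa using this
    exact ht.eventually_lt_const hδ
  have e3 : ∀ᶠ z : (Fin n → ℝ) × (Fin m → ℝ) in 𝓝 zb,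
      {r | ∃ y : Fin m → ℝ, (∀ i, g (z.1, y) i ≤ 0) ∧ f (z.1, y) = r}.Nonempty ∧
      BddBelow {r | ∃ y : Fin m → ℝ, (∀ i, g (z.1, y) i ≤ 0) ∧ f (z.1, y) = r} :=
    (continuous_fst.tendsto zb).eventually hfinite
  have hpen : ∀ᶠ z : (Fin n → ℝ) × (Fin m → ℝ) in 𝓝 zb,
      ((∀ j, G z j ≤ 0) ∧ (∀ i, g z i ≤ 0)) →
        F zb + lam * f zb ≤ F z + lam * f z - lam * (B z - B zb) := by
    filter_upwards [e1, e2, e3] with z hz1 hz2 hz3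
    rintro ⟨hGz, hgz⟩
    set u : ℝ := f z - φ z.1 with hu
    have hmem : f z ∈ {r | ∃ y : Fin m → ℝ, (∀ i, g (z.1, y) i ≤ 0) ∧ f (z.1, y) = r} :=
      ⟨z.2, by simpa using hgz, by simp⟩
    have hu0 : 0 ≤ u := by
      have : φ z.1 ≤ f z := by rw [hφ z.1]; exact csInf_le hz3.2 hmem
      simp [hu]; linarith
    have hBz : B z - B zb = DL (z.1 - xbar, 0) := by
      have h5 : ((z.1 - xbar, (0 : Fin m → ℝ)) : (Fin n → ℝ) × (Fin m → ℝ))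
          = (z.1, 0) - (xbar, 0) := by simp [Prod.ext_iff]
      rw [hB, hB, h5, map_sub]
    have hub : u ≤ f z - f zb - (B z - B zb) := by
      have := hphi_lb z.1 hz3.1
      rw [← hBz] at this
      simp only [hu]
      linarith
    have huV : ((z, u) : ((Fin n → ℝ) × (Fin m → ℝ)) × ℝ) ∈ U ×ˢ V := by
      refine ⟨hz1, hball ?_⟩
      rw [Metric.mem_ball, Real.dist_eq, sub_zero, abs_of_nonneg hu0]
      linarith
    have hP := hUV huV ⟨hGz, hgz, by simp [hu]⟩
    have habs : |u| = u := abs_of_nonneg hu0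
    rw [habs] at hP
    have hmul : lam * u ≤ lam * (f z - f zb - (B z - B zb)) :=
      mul_le_mul_of_nonneg_left hub hlam.le
    linarith
  -- Step D: KKT for the penalized smooth problem
  have hhpen : HasFDerivAt (fun z => F z + lam * f z - lam * (B z - B zb))
      (DF + lam • Df - lam • B) zb :=
    (hDF.add (hDf.const_mul lam)).sub ((B.hasFDerivAt.sub_const (B zb)).const_mul lam)
  obtain ⟨d₀, hd₀G, hd₀g⟩ := hULreg
  obtain ⟨μ, hμ0, hμc, hμstat⟩ := kkt_smooth
    (ι := Fin q ⊕ Fin p)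
    (c := Sum.elim (fun j z => G z j) (fun i z => g z i))
    (Dc := Sum.elim DG Dg)
    hhpen
    (fun k => by cases k with
      | inl j => exact hDG j
      | inr i => exact hDg i)
    (fun k => by cases k with
      | inl j => exact hfeas.1 j
      | inr i => exact hfeas.2.1 i)
    (by
      filter_upwards [hpen] with z hz hk
      have h1 := hz ⟨fun j => hk (Sum.inl j), fun i => hk (Sum.inr i)⟩
      simpa using h1)
    ⟨d₀, fun k => by cases k with
      | inl j => exact fun hj => hd₀G j hj
      | inr i => exact fun hi => hd₀g i hi⟩
  set v : Fin q → ℝ := fun j => μ (Sum.inl j) with hvdef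
  set uu : Fin p → ℝ := fun i => μ (Sum.inr i) with huudef
  have hstat : ∀ d : (Fin n → ℝ) × (Fin m → ℝ),
      (DF d + lam * Df d - lam * B d) + (∑ j, v j * DG j d + ∑ i, uu i * Dg i d) = 0 := by
    intro d
    have := hμstat d
    rw [Fintype.sum_sum_type] at this
    simpa [hvdef, huudef, smul_eq_mul] using this
  have hsplit : ∀ X : Fin p → ℝ,
      ∑ i, (uu i - lam * w i) * X i = ∑ i, uu i * X i - lam * ∑ i, w i * X i := by
    intro X
    rw [Finset.mul_sum, ← Finset.sum_sub_distrib]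
    exact Finset.sum_congr rfl fun i _ => by ring
  refine ⟨lam, uu, w, v, hlam.le, ?_, ?_, ?_, fun i => hμ0 (Sum.inr i), hfeas.2.1, ?_,
    fun j => hμ0 (Sum.inl j), hfeas.1, ?_, hw0, ?_⟩
  · -- x-stationarity
    intro dx
    have h1 := hstat (dx, 0)
    have h2 : B ((dx, 0) : (Fin n → ℝ) × (Fin m → ℝ))
        = Df (dx, 0) + ∑ i, w i * Dg i (dx, 0) := by
      rw [hB]
      simp [hDLdef, ContinuousLinearMap.sum_apply, smul_eq_mul]
    rw [h2] at h1
    rw [hsplit (fun i => Dg i (dx, 0))]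
    simp only [hDFdef, hDfdef, hDgdef, hDGdef] at h1 ⊢
    linarith
  · -- y-stationarity
    intro dy
    have h1 := hstat (0, dy)
    have h2 : B (((0 : Fin n → ℝ), dy) : (Fin n → ℝ) × (Fin m → ℝ)) = 0 := by
      rw [hB]
      exact DL.map_zero
    rw [h2] at h1
    have h3 := hwstat' dy
    rw [hsplit (fun i => Dg i (0, dy))]
    simp only [hDFdef, hDfdef, hDgdef, hDGdef] at h1 h3 ⊢
    have h4 := congrArg (fun t => lam * t) h3
    simp only [mul_add, mul_zero] at h4
    linarith
  · -- lower-level stationarity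
    intro dy
    have h3 := hwstat' dy
    simp only [hDfdef, hDgdef] at h3
    exact h3
  · exact Finset.sum_eq_zero fun i _ => hμc (Sum.inr i)
  · exact Finset.sum_eq_zero fun j _ => hμc (Sum.inl j)
  · exact Finset.sum_eq_zero fun i _ => hwc i
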